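/- Let (G, X) be a self-similar group action and let M = X* ⋈ G be the associated Zappa–Szép product. Then two elements (u, g) and (v, h) of M are R-related (i.e. generate the same principal right ideal: (u, g)M = (v, h)M) if and only if u = v. Consequently, every R-class of M contains exactly one element of the form (u, 1) with u ∈ X*. -/

import Mathlib

universe u v w

/-- A self-similar group action `(G, X)`: a group `G`, a set `X`, an action map
`G × X* → X*` and a restriction map `G × X* → G` satisfying (SS1)–(SS8). -/
structure SelfSimilarAction (G : Type u) [Group G] (X : Type v) where
  act : G → FreeMonoid X → FreeMonoid X
  res : G → FreeMonoid X → G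
  /-- (SS1) `1 · u = u` -/
  one_act : ∀ u : FreeMonoid X, act 1 u = u
  /-- (SS2) `(gh) · u = g · (h · u)` -/
  mul_act : ∀ (g h : G) (u : FreeMonoid X), act (g * h) u = act g (act h u)
  /-- (SS3) `g · 1 = 1` -/
  act_one : ∀ g : G, act g 1 = 1
  /-- (SS4) `g · (uv) = (g · u)((g|_u) · v)` -/
  act_mul : ∀ (g : G) (u v : FreeMonoid X), act g (u * v) = act g u * act (res g u) v
  /-- (SS5) `g|_1 = g` -/
  res_one : ∀ g : G, res g 1 = g
  /-- (SS6) `g|_{uv} = (g|_u)|_v` -/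
  res_mul : ∀ (g : G) (u v : FreeMonoid X), res g (u * v) = res (res g u) v
  /-- (SS7) `1|_u = 1` -/
  one_res : ∀ u : FreeMonoid X, res 1 u = 1
  /-- (SS8) `(gh)|_u = (g|_{h·u})(h|_u)` -/
  mul_res : ∀ (g h : G) (u : FreeMonoid X), res (g * h) u = res g (act h u) * res h u

namespace SelfSimilarAction

variable {G : Type u} [Group G] {X : Type v}

/-- The Zappa–Szép product `X* ⋈ G`: underlying set `X* × G`. -/
def ZS (A : SelfSimilarAction G X) : Type (max u v) := FreeMonoid X × G

/-- The element `(u, g)` of `X* ⋈ G`. -/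
def pair (A : SelfSimilarAction G X) (u : FreeMonoid X) (g : G) : A.ZS := (u, g)

/-- The Zappa–Szép product `X* ⋈ G` is a monoid with multiplication
`(u, g)(v, h) = (u (g·v), (g|_v) h)` and identity `(1, 1)`. -/
instance (A : SelfSimilarAction G X) : Monoid A.ZS where
  mul p q := ((p.1 * A.act p.2 q.1, A.res p.2 q.1 * q.2) : FreeMonoid X × G)
  one := (((1 : FreeMonoid X), (1 : G)) : FreeMonoid X × G)
  mul_assoc p q r := by
    show (((p.1 * A.act p.2 q.1) * A.act (A.res p.2 q.1 * q.2) r.1,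
        A.res (A.res p.2 q.1 * q.2) r.1 * r.2) : FreeMonoid X × G) =
      ((p.1 * A.act p.2 (q.1 * A.act q.2 r.1),
        A.res p.2 (q.1 * A.act q.2 r.1) * (A.res q.2 r.1 * r.2)) : FreeMonoid X × G)
    rw [A.mul_act, A.act_mul, A.mul_res, A.res_mul, mul_assoc, mul_assoc]
  one_mul p := by
    show (((1 : FreeMonoid X) * A.act 1 p.1, A.res 1 p.1 * p.2) : FreeMonoid X × G) = p
    rw [A.one_act, A.one_res, one_mul, one_mul]
    exact Prod.mk.eta
  mul_one p := by
    show ((p.1 * A.act p.2 1, A.res p.2 1 * 1) : FreeMonoid X × G) = p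
    rw [A.act_one, A.res_one, mul_one, mul_one]
    exact Prod.mk.eta

end SelfSimilarAction

/-- in `M = X* ⋈ G`, `(u,g)` and `(v,h)` are `R`-related (generate the same
principal right ideal) iff `u = v`; consequently every `R`-class contains exactly one
element of the form `(u, 1)`. -/
theorem stmt4 (G : Type u) [Group G] (X : Type v) (A : SelfSimilarAction G X) :
    (∀ (u v : FreeMonoid X) (g h : G),
      Set.range (fun m : A.ZS => A.pair u g * m) =
          Set.range (fun m : A.ZS => A.pair v h * m) ↔ u = v) ∧
    (∀ p : A.ZS, ∃! u : FreeMonoid X,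
      Set.range (fun m : A.ZS => p * m) =
        Set.range (fun m : A.ZS => A.pair u 1 * m)) := by
  have hmul : ∀ (u : FreeMonoid X) (g : G) (m : A.ZS),
      A.pair u g * m = ((u * A.act g m.1, A.res g m.1 * m.2) : FreeMonoid X × G) :=
    fun _ _ _ => rfl
  have hsub : ∀ (u : FreeMonoid X) (g h : G),
      Set.range (fun m : A.ZS => A.pair u g * m) ⊆
        Set.range (fun m : A.ZS => A.pair u h * m) := by
    rintro u g h x ⟨m, rfl⟩
    refine ⟨((A.act (h⁻¹ * g) m.1,
      (A.res h (A.act (h⁻¹ * g) m.1))⁻¹ * (A.res g m.1 * m.2)) : FreeMonoid X × G), ?_⟩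
    simp only [hmul]
    show (u * A.act h (A.act (h⁻¹ * g) m.1), A.res h (A.act (h⁻¹ * g) m.1) *
      ((A.res h (A.act (h⁻¹ * g) m.1))⁻¹ * (A.res g m.1 * m.2))) = _
    rw [← A.mul_act, mul_inv_cancel_left, mul_inv_cancel_left]
  have key : ∀ (u v : FreeMonoid X) (g h : G),
      Set.range (fun m : A.ZS => A.pair u g * m) =
          Set.range (fun m : A.ZS => A.pair v h * m) ↔ u = v := by
    intro u v g h
    constructor
    · intro hr
      have hu : (A.pair u g : A.ZS) ∈ Set.range (fun m : A.ZS => A.pair v h * m) := by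
        rw [← hr]; exact ⟨1, mul_one _⟩
      have hv : (A.pair v h : A.ZS) ∈ Set.range (fun m : A.ZS => A.pair u g * m) := by
        rw [hr]; exact ⟨1, mul_one _⟩
      obtain ⟨m, hm⟩ := hu
      obtain ⟨n, hn⟩ := hv
      simp only [hmul] at hm hn
      have h1 : v * A.act h m.1 = u := congrArg Prod.fst hm
      have h2 : u * A.act g n.1 = v := congrArg Prod.fst hn
      have h3 : u * (A.act g n.1 * A.act h m.1) = u := by
        rw [← mul_assoc, h2, h1]
      have h4 : A.act g n.1 * A.act h m.1 = 1 := by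
        have := h3
        nth_rewrite 2 [← mul_one u] at this
        exact mul_left_cancel this
      have h5 : A.act g n.1 = 1 := by
        have := congrArg FreeMonoid.toList h4
        simp only [FreeMonoid.toList_mul, FreeMonoid.toList_one] at this
        rcases List.append_eq_nil_iff.mp this with ⟨ha, _⟩
        exact FreeMonoid.toList.injective (by simp [ha])
      rw [← h2, h5, mul_one]
    · rintro rfl
      exact le_antisymm (hsub u g h) (hsub u h g)
  refine ⟨key, fun p => ⟨p.1, ?_, fun y hy => ?_⟩⟩
  · have : (A.pair p.1 p.2 : A.ZS) = p := rfl
    rw [← this]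
    exact le_antisymm (hsub p.1 p.2 1) (hsub p.1 1 p.2)
  · have : (A.pair p.1 p.2 : A.ZS) = p := rfl
    rw [← this] at hy
    exact ((key p.1 y p.2 1).mp hy).symm
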